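/- The number of occurrences of each generator symbol c_α in a well formed word is invariant under elementary movements; consequently, for distinct generators α ≠ β, the words (c_α) and (c_β) are not equivalent, i.e., the canonical map from the generating set Σ to the equivalence classes of well formed words is injective. -/

import Mathlib

/-- The alphabet associated with a cellular extension of an `n`-category: a symbol `c_α`
for each generator `α`, a symbol `i_x` for each `n`-cell `x`, a composition symbol `∗_k`
for each `0 ≤ k ≤ n`, and opening and closing parentheses. -/
inductive CESym (G X : Type*) (n : ℕ) : Type _
  | gen : G → CESym G X n
  | idd : X → CESym G X n
  | comp : Fin (n + 1) → CESym G X n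
  | lpar : CESym G X n
  | rpar : CESym G X n

/-- The contribution of a symbol to the parenthesis count: `+1` for an opening parenthesis,
`-1` for a closing one, `0` otherwise. -/
def pval {G X : Type*} {n : ℕ} : CESym G X n → ℤ
  | .lpar => 1
  | .rpar => -1
  | _ => 0

/-- `P w i` is the number of opening parentheses among the first `i + 1` symbols of `w`
minus the number of closing parentheses among them. -/
def P {G X : Type*} {n : ℕ} (w : List (CESym G X n)) (i : ℕ) : ℤ :=
  ((w.take (i + 1)).map pval).sum

/-- A word is well parenthesized if it is nonempty, the running parenthesis count is
nonnegative at every position, and vanishes exactly at the last position. -/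
def WellParen {G X : Type*} {n : ℕ} (w : List (CESym G X n)) : Prop :=
  w ≠ [] ∧ (∀ i < w.length, 0 ≤ P w i) ∧ ∀ i < w.length, (P w i = 0 ↔ i = w.length - 1)

/-- Well formed words (syntactically): atoms `(c_α)` and `(i_x)` are well formed, and
`(v ∗_k w)` is well formed whenever `v` and `w` are. -/
inductive WFS {G X : Type*} {n : ℕ} : List (CESym G X n) → Prop
  | gen (α : G) : WFS [.lpar, .gen α, .rpar]
  | idd (x : X) : WFS [.lpar, .idd x, .rpar]
  | comp (k : Fin (n + 1)) (v w : List (CESym G X n)) : WFS v → WFS w →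
      WFS (.lpar :: v ++ .comp k :: w ++ [.rpar])

/-- The word `(v ∗_k w)`. -/
def cw {G X : Type*} {n : ℕ} (k : Fin (n + 1)) (v w : List (CESym G X n)) :
    List (CESym G X n) :=
  .lpar :: v ++ .comp k :: w ++ [.rpar]

/-- The data and axioms of a strict ω-category (globular sets with compositions and units,
satisfying the globular identities, associativity, unit, functoriality and interchange
axioms). Only the cells of dimension at most `n` are used for an `n`-category. -/
structure StrictOmegaCat where
  Obj : ℕ → Type*
  src : ∀ {k m : ℕ}, k < m → Obj m → Obj k
  tgt : ∀ {k m : ℕ}, k < m → Obj m → Obj k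
  comp : ∀ {k m : ℕ}, k < m → Obj m → Obj m → Obj m
  unit : ∀ {k m : ℕ}, k < m → Obj k → Obj m
  src_src : ∀ {l k m : ℕ} (h1 : l < k) (h2 : k < m) (x : Obj m),
      src h1 (src h2 x) = src (h1.trans h2) x
  src_tgt : ∀ {l k m : ℕ} (h1 : l < k) (h2 : k < m) (x : Obj m),
      src h1 (tgt h2 x) = src (h1.trans h2) x
  tgt_src : ∀ {l k m : ℕ} (h1 : l < k) (h2 : k < m) (x : Obj m),
      tgt h1 (src h2 x) = tgt (h1.trans h2) x
  tgt_tgt : ∀ {l k m : ℕ} (h1 : l < k) (h2 : k < m) (x : Obj m),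
      tgt h1 (tgt h2 x) = tgt (h1.trans h2) x
  src_comp_self : ∀ {k m : ℕ} (h : k < m) (x y : Obj m), src h x = tgt h y →
      src h (comp h x y) = src h y
  tgt_comp_self : ∀ {k m : ℕ} (h : k < m) (x y : Obj m), src h x = tgt h y →
      tgt h (comp h x y) = tgt h x
  src_comp_lt : ∀ {l k m : ℕ} (h1 : l < k) (h2 : k < m) (x y : Obj m),
      src h2 x = tgt h2 y → src (h1.trans h2) (comp h2 x y) = src (h1.trans h2) x
  tgt_comp_lt : ∀ {l k m : ℕ} (h1 : l < k) (h2 : k < m) (x y : Obj m),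
      src h2 x = tgt h2 y → tgt (h1.trans h2) (comp h2 x y) = tgt (h1.trans h2) x
  src_comp_gt : ∀ {k l m : ℕ} (h1 : k < l) (h2 : l < m) (x y : Obj m),
      src (h1.trans h2) x = tgt (h1.trans h2) y →
      src h2 (comp (h1.trans h2) x y) = comp h1 (src h2 x) (src h2 y)
  tgt_comp_gt : ∀ {k l m : ℕ} (h1 : k < l) (h2 : l < m) (x y : Obj m),
      src (h1.trans h2) x = tgt (h1.trans h2) y →
      tgt h2 (comp (h1.trans h2) x y) = comp h1 (tgt h2 x) (tgt h2 y)
  src_unit : ∀ {k m : ℕ} (h : k < m) (x : Obj k), src h (unit h x) = x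
  tgt_unit : ∀ {k m : ℕ} (h : k < m) (x : Obj k), tgt h (unit h x) = x
  comp_assoc : ∀ {k m : ℕ} (h : k < m) (x y z : Obj m),
      src h x = tgt h y → src h y = tgt h z →
      comp h (comp h x y) z = comp h x (comp h y z)
  comp_unit_src : ∀ {k m : ℕ} (h : k < m) (x : Obj m),
      comp h x (unit h (src h x)) = x
  unit_tgt_comp : ∀ {k m : ℕ} (h : k < m) (x : Obj m),
      comp h (unit h (tgt h x)) x = x
  unit_comp : ∀ {k l m : ℕ} (h1 : k < l) (h2 : l < m) (x y : Obj l),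
      src h1 x = tgt h1 y →
      unit h2 (comp h1 x y) = comp (h1.trans h2) (unit h2 x) (unit h2 y)
  interchange : ∀ {k l m : ℕ} (h1 : k < l) (h2 : l < m) (x y z t : Obj m),
      src (h1.trans h2) x = tgt (h1.trans h2) y →
      src (h1.trans h2) z = tgt (h1.trans h2) t →
      src h2 x = tgt h2 z → src h2 y = tgt h2 t →
      comp h2 (comp (h1.trans h2) x y) (comp (h1.trans h2) z t) =
        comp (h1.trans h2) (comp h2 x z) (comp h2 y t)

/-- An ω-category is an `n`-category when every cell of dimension greater than `n` is
degenerate (a unit on an `n`-cell). -/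
def StrictOmegaCat.IsNCat (Ω : StrictOmegaCat) (n : ℕ) : Prop :=
  ∀ (m : ℕ) (h : n < m) (x : Ω.Obj m), ∃ y : Ω.Obj n, x = Ω.unit h y

/-- A cellular extension of the `n`-truncation of `Ω`: a set of generators together with
source and target `n`-cells, satisfying the globular conditions (vacuous when `n = 0`). -/
structure CellExt (Ω : StrictOmegaCat) (n : ℕ) where
  Gen : Type*
  σ : Gen → Ω.Obj n
  τ : Gen → Ω.Obj n
  src_glob : ∀ (h : n - 1 < n) (α : Gen), Ω.src h (σ α) = Ω.src h (τ α)
  tgt_glob : ∀ (h : n - 1 < n) (α : Gen), Ω.tgt h (σ α) = Ω.tgt h (τ α)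

/-- `WF E w a b` means that `w` is a well formed word (term) over the cellular extension
`E`, with `n`-source `a` and `n`-target `b`. -/
inductive WF {Ω : StrictOmegaCat} {n : ℕ} (E : CellExt Ω n) :
    List (CESym E.Gen (Ω.Obj n) n) → Ω.Obj n → Ω.Obj n → Prop
  | gen (α : E.Gen) : WF E [.lpar, .gen α, .rpar] (E.σ α) (E.τ α)
  | idd (x : Ω.Obj n) : WF E [.lpar, .idd x, .rpar] x x
  | compn (v w : List (CESym E.Gen (Ω.Obj n) n)) (a b c : Ω.Obj n) :
      WF E v b c → WF E w a b → WF E (cw (Fin.last n) v w) a c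
  | compk (k : ℕ) (hk : k < n) (v w : List (CESym E.Gen (Ω.Obj n) n))
      (a b a' b' : Ω.Obj n) :
      WF E v a b → WF E w a' b' → Ω.src hk a = Ω.tgt hk b' →
      WF E (cw ⟨k, Nat.lt_succ_of_lt hk⟩ v w) (Ω.comp hk a a') (Ω.comp hk b b')

/-- The word `(i_x)`. -/
def iw {G X : Type*} {n : ℕ} (x : X) : List (CESym G X n) := [.lpar, .idd x, .rpar]

/-- The five kinds of pairs `(e, e')` of well formed words occurring in elementary
movements: associativity, left and right unit removal, identity merging, interchange. -/
inductive ElemPair {Ω : StrictOmegaCat} {n : ℕ} (E : CellExt Ω n) :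
    List (CESym E.Gen (Ω.Obj n) n) → List (CESym E.Gen (Ω.Obj n) n) → Prop
  | assoc (k : Fin (n + 1)) (x y z : List (CESym E.Gen (Ω.Obj n) n))
      (hx : ∃ a b, WF E x a b) (hy : ∃ a b, WF E y a b) (hz : ∃ a b, WF E z a b) :
      ElemPair E (cw k (cw k x y) z) (cw k x (cw k y z))
  | unit_left_n (x : List (CESym E.Gen (Ω.Obj n) n)) (a b : Ω.Obj n) (hx : WF E x a b) :
      ElemPair E (cw (Fin.last n) (iw b) x) x
  | unit_left_k (k : ℕ) (hk : k < n) (x : List (CESym E.Gen (Ω.Obj n) n))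
      (a b : Ω.Obj n) (hx : WF E x a b) :
      ElemPair E (cw ⟨k, Nat.lt_succ_of_lt hk⟩ (iw (Ω.unit hk (Ω.tgt hk b))) x) x
  | unit_right_n (x : List (CESym E.Gen (Ω.Obj n) n)) (a b : Ω.Obj n) (hx : WF E x a b) :
      ElemPair E (cw (Fin.last n) x (iw a)) x
  | unit_right_k (k : ℕ) (hk : k < n) (x : List (CESym E.Gen (Ω.Obj n) n))
      (a b : Ω.Obj n) (hx : WF E x a b) :
      ElemPair E (cw ⟨k, Nat.lt_succ_of_lt hk⟩ x (iw (Ω.unit hk (Ω.src hk a)))) x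
  | merge (k : ℕ) (hk : k < n) (c d : Ω.Obj n) :
      ElemPair E (cw ⟨k, Nat.lt_succ_of_lt hk⟩ (iw c) (iw d)) (iw (Ω.comp hk c d))
  | interchange (l k : ℕ) (hlk : l < k) (hk : k ≤ n)
      (x y z t : List (CESym E.Gen (Ω.Obj n) n))
      (hx : ∃ a b, WF E x a b) (hy : ∃ a b, WF E y a b)
      (hz : ∃ a b, WF E z a b) (ht : ∃ a b, WF E t a b) :
      ElemPair E
        (cw ⟨l, by omega⟩ (cw ⟨k, by omega⟩ x y) (cw ⟨k, by omega⟩ z t))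
        (cw ⟨k, by omega⟩ (cw ⟨l, by omega⟩ x z) (cw ⟨l, by omega⟩ y t))

/-- An elementary movement from `u` to `u'`: a decomposition `u = v e w`, `u' = v e' w`
with `e`, `e'` well formed words forming one of the five elementary pairs. -/
def ElemMove {Ω : StrictOmegaCat} {n : ℕ} (E : CellExt Ω n)
    (u u' : List (CESym E.Gen (Ω.Obj n) n)) : Prop :=
  ∃ v w e e', u = v ++ e ++ w ∧ u' = v ++ e' ++ w ∧
    (∃ a b, WF E e a b) ∧ (∃ a b, WF E e' a b) ∧ ElemPair E e e'

/-- Two well formed words are equivalent when they are connected by a finite zig-zag of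
elementary movements. -/
def WEquiv {Ω : StrictOmegaCat} {n : ℕ} (E : CellExt Ω n)
    (u u' : List (CESym E.Gen (Ω.Obj n) n)) : Prop :=
  Relation.EqvGen (ElemMove E) u u'

/-- The word `(c_α)`. -/
def gw {G X : Type*} {n : ℕ} (α : G) : List (CESym G X n) := [.lpar, .gen α, .rpar]

/-- The number of occurrences of the generator symbol `c_α` in a word. -/
def genCount {G X : Type*} {n : ℕ} [DecidableEq G] (α : G) (u : List (CESym G X n)) : ℕ :=
  u.countP (fun s => match s with | CESym.gen β => decide (β = α) | _ => false)

lemma genCount_append {G X : Type*} {n : ℕ} [DecidableEq G] (α : G)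
    (u v : List (CESym G X n)) :
    genCount α (u ++ v) = genCount α u + genCount α v :=
  List.countP_append

lemma genCount_cw {G X : Type*} {n : ℕ} [DecidableEq G] (α : G) (k : Fin (n + 1))
    (v w : List (CESym G X n)) :
    genCount α (cw k v w) = genCount α v + genCount α w := by
  simp [cw, genCount, List.countP_append, List.countP_cons]

lemma genCount_iw {G X : Type*} {n : ℕ} [DecidableEq G] (α : G) (x : X) :
    genCount α (iw (n := n) (G := G) x) = 0 := by
  simp [iw, genCount, List.countP_cons]

lemma genCount_elemPair {Ω : StrictOmegaCat} {n : ℕ} {E : CellExt Ω n}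
    [DecidableEq E.Gen] {e e' : List (CESym E.Gen (Ω.Obj n) n)}
    (h : ElemPair E e e') (α : E.Gen) : genCount α e = genCount α e' := by
  cases h <;> simp [genCount_cw, genCount_iw] <;> omega

lemma genCount_elemMove {Ω : StrictOmegaCat} {n : ℕ} {E : CellExt Ω n}
    [DecidableEq E.Gen] {u u' : List (CESym E.Gen (Ω.Obj n) n)}
    (h : ElemMove E u u') (α : E.Gen) : genCount α u = genCount α u' := by
  obtain ⟨v, w, e, e', rfl, rfl, -, -, hp⟩ := h
  simp [genCount_append, genCount_elemPair hp α]

lemma genCount_wequiv {Ω : StrictOmegaCat} {n : ℕ} {E : CellExt Ω n}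
    [DecidableEq E.Gen] {u u' : List (CESym E.Gen (Ω.Obj n) n)}
    (h : WEquiv E u u') (α : E.Gen) : genCount α u = genCount α u' := by
  induction h with
  | rel _ _ h => exact genCount_elemMove h α
  | refl => rfl
  | symm _ _ _ ih => exact ih.symm
  | trans _ _ _ _ _ ih1 ih2 => exact ih1.trans ih2

/-- The number of occurrences of each generator symbol is invariant under elementary
movements; consequently the canonical map from the generating set to the set of
equivalence classes of well formed words, `α ↦ [(c_α)]`, is injective. -/
theorem genCount_invariant_and_injective {Ω : StrictOmegaCat} {n : ℕ}
    (E : CellExt Ω n) [DecidableEq E.Gen] (hΩ : Ω.IsNCat n) :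
    (∀ (u u' : List (CESym E.Gen (Ω.Obj n) n)), ElemMove E u u' →
      ∀ α : E.Gen, genCount α u = genCount α u') ∧
    Function.Injective (fun α : E.Gen => Quot.mk (WEquiv E) (gw α)) := by
  refine ⟨fun u u' h α => genCount_elemMove h α, ?_⟩
  intro α β h
  have hq : Relation.EqvGen (WEquiv E) (gw α) (gw β) := Quot.eq.mp h
  have heq : WEquiv E (gw α) (gw β) :=
    (Relation.EqvGen.is_equivalence (ElemMove E)).eqvGen_iff.mp hq
  have := genCount_wequiv heq α
  by_contra hne
  simp [gw, genCount, List.countP_cons, hne, Ne.symm hne] at this
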